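/- arXiv:1111.1449 — 2 statements merged into one kernel-verified Lean document; each statement's English description precedes it below -/
import Mathlib

section
/- Let c : ℤ × ℤ → ℤ be a bounded two-cocycle on the group ℤ with integer values, i.e. c(m,n) − c(l+m, n) + c(l, m+n) − c(l,m) = 0 for all l,m,n and sup |c| < ∞. Then there exists a function b : ℤ → ℤ with c(m,n) = b(m) − b(m+n) + b(n) for all m,n, and b is a quasimorphism; moreover the real number r = lim_{n→∞} b(n)/n exists, and its class r + ℤ ∈ ℝ/ℤ is independent of the choice of b. -/
open Filter

private def B (c : ℤ → ℤ → ℤ) : ℤ → ℤ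
  | Int.ofNat k => c 0 0 - ∑ j ∈ Finset.range k, c j 1
  | Int.negSucc k => c 0 0 + ∑ j ∈ Finset.range (k+1), c (-(j+1)) 1

private lemma B_succ (c : ℤ → ℤ → ℤ) (n : ℤ) : B c (n + 1) = B c n - c n 1 := by
  cases n with
  | ofNat k =>
    show B c (Int.ofNat (k+1)) = B c (Int.ofNat k) - c (Int.ofNat k) 1
    simp [B, Finset.sum_range_succ]; ring
  | negSucc k =>
    cases k with
    | zero =>
      show B c (Int.ofNat 0) = B c (Int.negSucc 0) - c (Int.negSucc 0) 1
      simp [B]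
    | succ k =>
      show B c (Int.negSucc k) = B c (Int.negSucc (k+1)) - c (Int.negSucc (k+1)) 1
      have : (Int.negSucc (k+1)) = -((k:ℤ)+1+1) := by simp [Int.negSucc_eq]
      simp [B, Finset.sum_range_succ, this]
      ring

private lemma B_coboundary (c : ℤ → ℤ → ℤ)
    (hcocycle : ∀ l m n : ℤ, c m n - c (l + m) n + c l (m + n) - c l m = 0) :
    ∀ m n : ℤ, c m n = B c m - B c (m + n) + B c n := by
  have hc0 : ∀ m : ℤ, c m 0 = c 0 0 := by
    intro m
    have h1 := hcocycle (-m) m 0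
    have h2 := hcocycle 0 0 0
    simp at h1 h2
    omega
  intro m n
  induction' n using Int.induction_on with n ih n ih
  · have hB0 : B c (0 : ℤ) = c 0 0 := by simp [B]
    rw [hc0 m, add_zero, hB0]
    ring
  · have hstep := hcocycle m n 1
    have h1 := B_succ c n
    have h2 := B_succ c (m + n)
    have e : m + ((n:ℤ) + 1) = (m + n) + 1 := by ring
    rw [e, h2, h1]
    omega
  · have hstep := hcocycle m (-n - 1) 1
    have h1 := B_succ c (-n - 1)
    have h2 := B_succ c (m + (-n - 1))
    have e1 : (-(n:ℤ) - 1) + 1 = -(n:ℤ) := by ring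
    have e2 : m + (-(n:ℤ) - 1) + 1 = m + -(n:ℤ) := by ring
    rw [e1] at h1 hstep
    rw [e2] at h2
    have e3 : m + (-(n:ℤ) - 1) = m + -(n:ℤ) - 1 := by ring
    rw [e3] at hstep h2 ⊢
    omega

theorem stmt_6 (c : ℤ → ℤ → ℤ)
    (hcocycle : ∀ l m n : ℤ, c m n - c (l + m) n + c l (m + n) - c l m = 0)
    (hbdd : ∃ M : ℤ, ∀ m n : ℤ, |c m n| ≤ M) :
    ∃ b : ℤ → ℤ,
      (∀ m n : ℤ, c m n = b m - b (m + n) + b n) ∧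
      (∃ D : ℝ, ∀ m n : ℤ, |(b m : ℝ) - b (m + n) + b n| ≤ D) ∧
      ∃ r : ℝ, Tendsto (fun n : ℕ => (b n : ℝ) / n) atTop (nhds r) ∧
        ∀ b' : ℤ → ℤ, (∀ m n : ℤ, c m n = b' m - b' (m + n) + b' n) →
          ∀ r' : ℝ, Tendsto (fun n : ℕ => (b' n : ℝ) / n) atTop (nhds r') →
            ∃ k : ℤ, r - r' = (k : ℝ) := by
  obtain ⟨M, hM⟩ := hbdd
  have hM0 : (0:ℝ) ≤ M := by exact_mod_cast le_trans (abs_nonneg _) (hM 0 0)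
  set b := B c with hb
  have hcob : ∀ m n : ℤ, c m n = b m - b (m + n) + b n := B_coboundary c hcocycle
  have hcobR : ∀ m n : ℤ, (c m n : ℝ) = (b m : ℝ) - b (m + n) + b n := by
    intro m n; exact_mod_cast hcob m n
  have hMR : ∀ m n : ℤ, |(c m n : ℝ)| ≤ M := by
    intro m n; exact_mod_cast hM m n
  refine ⟨b, hcob, ⟨(M : ℝ), fun m n => by rw [← hcobR m n]; exact hMR m n⟩, ?_⟩
  set u : ℕ → ℝ := fun n => (b n : ℝ) + M with hu
  have hsub : Subadditive u := by
    intro m n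
    have h := hcobR m n
    have habs := abs_le.mp (hMR m n)
    simp only [hu]
    push_cast
    push_cast at h
    linarith
  have hlow : ∀ n : ℕ, ((b 1 : ℝ) - M) * (n + 1) ≤ (b ((n:ℤ) + 1) : ℝ) := by
    intro n
    induction' n with n ih
    · push_cast; nlinarith
    · have h := hcobR (n+1) 1
      have habs := abs_le.mp (hMR (n+1) 1)
      push_cast
      push_cast at ih h
      nlinarith
  have hbddbelow : BddBelow (Set.range fun n : ℕ => u n / n) := by
    refine ⟨min 0 ((b 1 : ℝ) - M), ?_⟩
    rintro x ⟨n, rfl⟩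
    rcases Nat.eq_zero_or_pos n with h | h
    · simp [h, hu]
    · obtain ⟨k, rfl⟩ := Nat.exists_eq_succ_of_ne_zero (Nat.pos_iff_ne_zero.mp h)
      have hnn : (0:ℝ) < (k:ℝ) + 1 := by positivity
      have hl := hlow k
      have h2 : ((b 1 : ℝ) - M) ≤ u (k+1) / ((k+1 : ℕ) : ℝ) := by
        rw [le_div_iff₀ (by exact_mod_cast Nat.succ_pos k)]
        simp only [hu]
        push_cast
        push_cast at hl
        nlinarith
      exact le_trans (min_le_right _ _) h2
  have htendb : Tendsto (fun n : ℕ => (b n : ℝ) / n) atTop (nhds hsub.lim) := by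
    have h2 : Tendsto (fun n : ℕ => (M:ℝ) / n) atTop (nhds 0) :=
      tendsto_const_div_atTop_nhds_zero_nat (M:ℝ)
    have h3 := (hsub.tendsto_lim hbddbelow).sub h2
    rw [sub_zero] at h3
    refine h3.congr fun n => ?_
    simp only [hu]
    rw [add_div]
    ring
  refine ⟨hsub.lim, htendb, ?_⟩
  intro b' hcob' r' htend'
  refine ⟨b 1 - b' 1, ?_⟩
  have key : ∀ n : ℕ, (b n : ℤ) - b' n = n * (b 1 - b' 1) := by
    intro n
    induction' n with n ih
    · have h1 : c 0 0 = b 0 - b 0 + b 0 := by simpa using hcob 0 0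
      have h2 : c 0 0 = b' 0 - b' 0 + b' 0 := by simpa using hcob' 0 0
      simp; omega
    · have h1 := hcob n 1
      have h2 := hcob' n 1
      have e : ((n:ℤ)+1)*(b 1 - b' 1) = n*(b 1 - b' 1) + (b 1 - b' 1) := by ring
      push_cast
      rw [e]
      omega
  have hconst : Tendsto (fun n : ℕ => ((b n : ℝ) / n - (b' n : ℝ) / n)) atTop
      (nhds ((b 1 - b' 1 : ℤ) : ℝ)) := by
    have hev : ∀ᶠ n : ℕ in atTop,
        ((b 1 - b' 1 : ℤ) : ℝ) = (b n : ℝ) / n - (b' n : ℝ) / n := by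
      filter_upwards [eventually_ge_atTop 1] with n hn
      have hnn : ((n:ℝ)) ≠ 0 := by positivity
      have hk : ((b n : ℤ) : ℝ) - ((b' n : ℤ) : ℝ) = (n:ℝ) * ((b 1 - b' 1 : ℤ) : ℝ) := by
        exact_mod_cast congrArg (fun x : ℤ => (x : ℝ)) (key n)
      rw [div_sub_div_same, hk, mul_div_cancel_left₀ _ hnn]
    exact Tendsto.congr' hev tendsto_const_nhds
  have huniq := tendsto_nhds_unique (htendb.sub htend') hconst
  exact huniq
end

section
/- Let G be a group, and let K : G → C(X, ℝ)/ℝ be a one-cocycle for the action of G on a space X, i.e. K(gh) = K(g)∘h + K(h) for all g,h ∈ G (where G acts on functions by precomposition). Fix two points x, y ∈ X and suppose the two-cochains G_x(g,h) := K(g)(hx) − K(g)(x) and G_y(g,h) := K(g)(hy) − K(g)(y) are bounded on G × G. Then the map q : G → ℝ defined by q(g) := K(g)(y) − K(g)(x) is a quasimorphism with defect D(q) ≤ ‖G_x‖∞ + ‖G_y‖∞. -/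
/-- `K : G → C(X,ℝ)/ℝ` is modelled by representatives `K : G → X → ℝ`, with the
cocycle identity `K(gh) = K(g)∘h + K(h)` holding modulo constants, i.e. on
differences of values. -/
theorem stmt_7 {G X : Type*} [Group G] [MulAction G X] (K : G → X → ℝ)
    (hK : ∀ (g h : G) (z w : X),
      K (g * h) z - K (g * h) w = (K g (h • z) - K g (h • w)) + (K h z - K h w))
    (x y : X) (Bx By : ℝ)
    (hBx : ∀ g h : G, |K g (h • x) - K g x| ≤ Bx)
    (hBy : ∀ g h : G, |K g (h • y) - K g y| ≤ By) :
    ∀ f g : G,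
      |(K f y - K f x) - (K (f * g) y - K (f * g) x) + (K g y - K g x)| ≤
        Bx + By := by
  intro f g
  have h1 := hK f g y x
  have h2 := hBx f g
  have h3 := hBy f g
  calc |(K f y - K f x) - (K (f * g) y - K (f * g) x) + (K g y - K g x)|
      = |(K f (g • x) - K f x) + -(K f (g • y) - K f y)| := by rw [h1]; ring_nf
    _ ≤ |K f (g • x) - K f x| + |-(K f (g • y) - K f y)| := abs_add_le _ _
    _ ≤ Bx + By := by rw [abs_neg]; exact add_le_add h2 h3
end
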